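/- arXiv:1109.0351 — 4 statements merged into one kernel-verified Lean document; each statement's English description precedes it below -/
import Mathlib

section
/- Let (X_0^T, Y_0^T) be a pair of jointly distributed continuous-time stochastic processes. Then the map t ↦ I(X_0^t → Y_0^t) is monotone nondecreasing on [0,T]. -/
open MeasureTheory ProbabilityTheory Real Set
open scoped ENNReal NNReal

noncomputable section


namespace CTDI

variable {Ω : Type*} [MeasurableSpace Ω]

/-- Relative entropy (Kullback--Leibler divergence) `D(P ‖ Q)`. -/
def relEnt {α : Type*} [MeasurableSpace α] (P Q : Measure α) : ℝ≥0∞ :=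
  open Classical in
  if P ≪ Q ∧ Integrable (fun x => Real.log (P.rnDeriv Q x).toReal) P then
    ENNReal.ofReal (∫ x, Real.log (P.rnDeriv Q x).toReal ∂P)
  else ⊤

/-- Mutual information `I(U;V) = D(P_{U,V} ‖ P_U × P_V)`. -/
def mutInfo {α β : Type*} [MeasurableSpace α] [MeasurableSpace β]
    (μ : Measure Ω) (U : Ω → α) (V : Ω → β) : ℝ≥0∞ :=
  relEnt (μ.map fun ω => (U ω, V ω)) ((μ.map U).prod (μ.map V))

/-- Conditional mutual information `I(U;V|W)` à la Wyner: the supremum over all finite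
quantizations `f`, `g` of `U` and `V` of `I([U]; [V], W) - I([U]; W)`. -/
def condMI {α β γ : Type*} [MeasurableSpace α] [MeasurableSpace β] [MeasurableSpace γ]
    (μ : Measure Ω) (U : Ω → α) (V : Ω → β) (W : Ω → γ) : ℝ≥0∞ :=
  ⨆ (k : ℕ) (l : ℕ) (f : α → Fin k) (g : β → Fin l)
      (_ : Measurable f) (_ : Measurable g),
    mutInfo μ (fun ω => f (U ω)) (fun ω => (g (V ω), W ω)) -
      mutInfo μ (fun ω => f (U ω)) W

/-- The restriction `Z_a^b = {Z_s : a ≤ s < b}` of a continuous-time process,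
viewed as a random object valued in the function space `Ico a b → E`. -/
def seg {E : Type*} (Z : ℝ → Ω → E) (a b : ℝ) : Ω → (Ico a b → E) :=
  fun ω s => Z s.1 ω

/-- A finite partition `a = t_0 < t_1 < ⋯ < t_n = b` of the interval `[a,b)`. -/
structure Partn (a b : ℝ) where
  n : ℕ
  t : ℕ → ℝ
  mono : ∀ i < n, t i < t (i + 1)
  first : t 0 = a
  last : t n = b

/-- `I_t(X_a^b → Y_a^b) = Σ_{i=1}^n I(Y_{t_{i-1}}^{t_i}; X_a^{t_i} | Y_a^{t_{i-1}})`. -/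
def dInfoP {E F : Type*} [MeasurableSpace E] [MeasurableSpace F] (μ : Measure Ω)
    (X : ℝ → Ω → E) (Y : ℝ → Ω → F) {a b : ℝ} (P : Partn a b) : ℝ≥0∞ :=
  ∑ i ∈ Finset.range P.n,
    condMI μ (seg Y (P.t i) (P.t (i + 1))) (seg X a (P.t (i + 1))) (seg Y a (P.t i))

/-- Directed information in continuous time:
`I(X_a^b → Y_a^b) = inf_t I_t(X_a^b → Y_a^b)` over all finite partitions of `[a,b)`. -/
def dInfo {E F : Type*} [MeasurableSpace E] [MeasurableSpace F] (μ : Measure Ω)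
    (X : ℝ → Ω → E) (Y : ℝ → Ω → F) (a b : ℝ) : ℝ≥0∞ :=
  ⨅ P : Partn a b, dInfoP μ X Y P

/-- Restriction of a function on `Ico a c` to `Ico a b` when `b ≤ c`. -/
def restrictMap {E : Type*} (a : ℝ) {b c : ℝ} (h : b ≤ c) :
    (Ico a c → E) → (Ico a b → E) :=
  fun x s => x ⟨s.1, s.2.1, lt_of_lt_of_le s.2.2 h⟩

lemma measurable_restrictMap {E : Type*} [MeasurableSpace E] (a : ℝ) {b c : ℝ} (h : b ≤ c) :
    Measurable (restrictMap (E := E) a h) :=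
  measurable_pi_lambda _ fun _ => measurable_pi_apply _

lemma seg_restrict {E : Type*} (Z : ℝ → Ω → E) (a : ℝ) {b c : ℝ} (h : b ≤ c) (ω : Ω) :
    seg Z a b ω = restrictMap a h (seg Z a c ω) := rfl

/-- Conditional mutual information is monotone under measurable coarsenings of the
first two arguments. -/
lemma condMI_mono {α α' β β' γ : Type*} [MeasurableSpace α] [MeasurableSpace α']
    [MeasurableSpace β] [MeasurableSpace β'] [MeasurableSpace γ]
    (μ : Measure Ω) (U : Ω → α) (U' : Ω → α') (V : Ω → β) (V' : Ω → β') (W : Ω → γ)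
    (φ : α' → α) (hφ : Measurable φ) (ψ : β' → β) (hψ : Measurable ψ)
    (hU : ∀ ω, U ω = φ (U' ω)) (hV : ∀ ω, V ω = ψ (V' ω)) :
    condMI μ U V W ≤ condMI μ U' V' W := by
  refine iSup_le fun k => iSup_le fun l => iSup_le fun f => iSup_le fun g =>
    iSup_le fun hf => iSup_le fun hg => ?_
  have h1 : (fun ω => f (U ω)) = fun ω => (f ∘ φ) (U' ω) :=
    funext fun ω => by simp [hU ω]
  have h2 : (fun ω => (g (V ω), W ω)) = fun ω => ((g ∘ ψ) (V' ω), W ω) :=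
    funext fun ω => by simp [hV ω]
  rw [h1, h2]
  refine le_iSup_of_le k <| le_iSup_of_le l <| le_iSup_of_le (f ∘ φ) <|
    le_iSup_of_le (g ∘ ψ) <| le_iSup_of_le (hf.comp hφ) <| le_iSup_of_le (hg.comp hψ) ?_
  exact le_rfl

/-- The map `t ↦ I(X_0^t → Y_0^t)` is monotone nondecreasing on `[0,T]`. -/
theorem dInfo_monotone {E F : Type*} [MeasurableSpace E] [MeasurableSpace F]
    (μ : Measure Ω) [IsProbabilityMeasure μ] (T : ℝ) (hT : 0 < T)
    (X : ℝ → Ω → E) (Y : ℝ → Ω → F) :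
    MonotoneOn (fun t : ℝ => dInfo μ X Y 0 t) (Icc 0 T) := by
  classical
  intro s hs t ht hst
  simp only
  rcases eq_or_lt_of_le hst with rfl | hlt
  · exact le_rfl
  rcases eq_or_lt_of_le hs.1 with hs0 | hs0
  · -- s = 0 : the trivial partition shows `dInfo μ X Y 0 0 = 0`
    have h0 : dInfo μ X Y 0 s ≤ 0 := by
      rw [← hs0]
      refine iInf_le_of_le ⟨0, fun _ => 0, by simp, rfl, rfl⟩ ?_
      simp [dInfoP]
    exact h0.trans zero_le
  · -- 0 < s < t
    refine le_iInf fun P => ?_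
    have hn : 0 < P.n := by
      by_contra hn
      have hn0 : P.n = 0 := by omega
      have h1 : P.t P.n = t := P.last
      rw [hn0, P.first] at h1
      have ht0 : (0:ℝ) < t := hs0.trans hlt
      linarith
    set p : ℕ → Prop := fun i => i < P.n ∧ P.t i < s with hp
    set j : ℕ := Nat.findGreatest p P.n with hj
    have hpj : p j := by
      refine Nat.findGreatest_spec (m := 0) (Nat.zero_le _) ?_
      exact ⟨hn, by rw [P.first]; exact hs0⟩
    have hsle : s ≤ P.t (j + 1) := by
      by_cases hjn : j + 1 < P.n
      · by_contra hc
        push_neg at hc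
        exact Nat.findGreatest_is_greatest (Nat.lt_succ_self j) (by omega) ⟨hjn, hc⟩
      · have hje : j + 1 = P.n := by
          have := hpj.1; omega
        rw [hje, P.last]; exact hlt.le
    -- the induced partition of `[0, s)`
    refine iInf_le_of_le
      ⟨j + 1, fun i => if i ≤ j then P.t i else s, ?_, ?_, ?_⟩ ?_
    · intro i hi
      rcases lt_or_eq_of_le (Nat.lt_succ_iff.mp hi) with hij | hij
      · have h1 : i ≤ j := hij.le
        have h2 : i + 1 ≤ j := hij
        simp only [h1, h2, if_pos]
        exact P.mono i (lt_trans hij hpj.1)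
      · subst hij
        simp only [le_refl, if_pos, Nat.lt_irrefl, Nat.succ_le_iff.symm]
        rw [if_neg (by omega)]
        exact hpj.2
    · simp [P.first]
    · show (if j + 1 ≤ j then P.t (j+1) else s) = s
      rw [if_neg (by omega)]
    · -- `dInfoP` of the induced partition is at most `dInfoP μ X Y P`
      unfold dInfoP
      simp only
      calc
        ∑ i ∈ Finset.range (j + 1),
            condMI μ
              (seg Y (if i ≤ j then P.t i else s) (if i + 1 ≤ j then P.t (i+1) else s))
              (seg X 0 (if i + 1 ≤ j then P.t (i+1) else s))
              (seg Y 0 (if i ≤ j then P.t i else s))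
          ≤ ∑ i ∈ Finset.range (j + 1),
            condMI μ (seg Y (P.t i) (P.t (i+1))) (seg X 0 (P.t (i+1))) (seg Y 0 (P.t i)) := by
            refine Finset.sum_le_sum fun i hi => ?_
            have hij : i ≤ j := Nat.lt_succ_iff.mp (Finset.mem_range.mp hi)
            rw [if_pos hij]
            by_cases h2 : i + 1 ≤ j
            · rw [if_pos h2]
            · rw [if_neg h2]
              have hieq : i = j := by omega
              have hsle' : s ≤ P.t (i + 1) := by rw [hieq]; exact hsle
              exact condMI_mono μ _ _ _ _ _
                (restrictMap (P.t i) hsle') (measurable_restrictMap _ hsle')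
                (restrictMap 0 hsle') (measurable_restrictMap _ hsle')
                (seg_restrict Y (P.t i) hsle') (seg_restrict X 0 hsle')
        _ ≤ ∑ i ∈ Finset.range P.n,
            condMI μ (seg Y (P.t i) (P.t (i+1))) (seg X 0 (P.t (i+1))) (seg Y 0 (P.t i)) := by
            refine Finset.sum_le_sum_of_subset ?_
            exact Finset.range_subset_range.mpr (by have := hpj.1; omega)

end CTDI
end
end

section
/- Let (X_0^T, Y_0^T) be a pair of jointly distributed continuous-time stochastic processes, and let φ be a strictly increasing continuous function on [0,T]. Define time-dilated processes by (X̃_{φ(t)}, Ỹ_{φ(t)}) = (X_t, Y_t) for t ∈ [0,T). Then I(X_0^T → Y_0^T) = I(X̃_{φ(0)}^{φ(T)} → Ỹ_{φ(0)}^{φ(T)}). In particular, for α > 0, if X̃_t = X_{tα} and Ỹ_t = Y_{tα}, then I(X̃_0^{T/α} → Ỹ_0^{T/α}) = I(X_0^T → Y_0^T). -/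
open MeasureTheory ProbabilityTheory Real Set
open scoped ENNReal NNReal

noncomputable section


namespace CTDI

variable {Ω : Type*} [MeasurableSpace Ω]

/-! ### Auxiliary lemmas -/

section Aux

lemma map_comp_equiv {α β : Type*} [MeasurableSpace α] [MeasurableSpace β]
    (μ : Measure Ω) (U : Ω → α) (e : α ≃ᵐ β) :
    μ.map (fun ω => e (U ω)) = (μ.map U).map e := by
  by_cases h : AEMeasurable U μ
  · exact (AEMeasurable.map_map_of_aemeasurable e.measurable.aemeasurable h).symm
  · have h2 : ¬ AEMeasurable (fun ω => e (U ω)) μ := fun hc => h (by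
      have := e.symm.measurable.comp_aemeasurable hc
      simpa [Function.comp_def] using this)
    rw [Measure.map_of_not_aemeasurable h, Measure.map_of_not_aemeasurable h2, Measure.map_zero]

lemma relEnt_map_equiv {α β : Type*} [MeasurableSpace α] [MeasurableSpace β]
    (P Q : Measure α) [IsFiniteMeasure P] [IsFiniteMeasure Q]
    (e : α ≃ᵐ β) : relEnt (P.map e) (Q.map e) = relEnt P Q := by
  have hac : P.map e ≪ Q.map e ↔ P ≪ Q := by
    constructor
    · intro h
      have h2 := h.map e.symm.measurable
      simpa [Measure.map_map e.symm.measurable e.measurable] using h2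
    · intro h; exact h.map e.measurable
  by_cases hPQ : P ≪ Q
  · have hrn : (fun x => (P.map e).rnDeriv (Q.map e) (e x)) =ᵐ[P] P.rnDeriv Q :=
      (e.measurableEmbedding.rnDeriv_map P Q).filter_mono hPQ.ae_le
    have hfun : (fun x => Real.log ((P.map e).rnDeriv (Q.map e) (e x)).toReal)
        =ᵐ[P] fun x => Real.log ((P.rnDeriv Q) x).toReal :=
      hrn.mono fun x hx => congrArg (fun r : ℝ≥0∞ => Real.log r.toReal) hx
    have hint : Integrable (fun y => Real.log ((P.map e).rnDeriv (Q.map e) y).toReal) (P.map e)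
        ↔ Integrable (fun x => Real.log (P.rnDeriv Q x).toReal) P := by
      rw [integrable_map_equiv]
      exact integrable_congr hfun
    have hval : (∫ y, Real.log ((P.map e).rnDeriv (Q.map e) y).toReal ∂(P.map e))
        = ∫ x, Real.log ((P.rnDeriv Q) x).toReal ∂P := by
      rw [integral_map_equiv]
      exact integral_congr_ae hfun
    by_cases hI : Integrable (fun x => Real.log (P.rnDeriv Q x).toReal) P
    · rw [relEnt, relEnt, if_pos ⟨hac.mpr hPQ, hint.mpr hI⟩, if_pos ⟨hPQ, hI⟩, hval]
    · rw [relEnt, relEnt, if_neg (fun hc => hI (hint.mp hc.2)), if_neg (fun hc : _ ∧ _ => hI hc.2)]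
  · rw [relEnt, relEnt, if_neg (fun hc => hPQ (hac.mp hc.1)), if_neg (fun hc => hPQ hc.1)]

lemma mutInfo_comp_equiv {α β α' β' : Type*} [MeasurableSpace α] [MeasurableSpace β]
    [MeasurableSpace α'] [MeasurableSpace β']
    (μ : Measure Ω) [IsFiniteMeasure μ] (U : Ω → α) (V : Ω → β)
    (eU : α ≃ᵐ α') (eV : β ≃ᵐ β') :
    mutInfo μ (fun ω => eU (U ω)) (fun ω => eV (V ω)) = mutInfo μ U V := by
  unfold mutInfo
  have h1 : (μ.map fun ω => (eU (U ω), eV (V ω)))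
      = (μ.map fun ω => (U ω, V ω)).map (eU.prodCongr eV) :=
    map_comp_equiv μ (fun ω => (U ω, V ω)) (eU.prodCongr eV)
  have h2 : (μ.map fun ω => eU (U ω)) = (μ.map U).map eU := map_comp_equiv μ U eU
  have h3 : (μ.map fun ω => eV (V ω)) = (μ.map V).map eV := map_comp_equiv μ V eV
  rw [h1, h2, h3, Measure.map_prod_map _ _ eU.measurable eV.measurable]
  exact relEnt_map_equiv _ _ (eU.prodCongr eV)

lemma condMI_comp_equiv_le {α β γ α' β' γ' : Type*} [MeasurableSpace α] [MeasurableSpace β]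
    [MeasurableSpace γ] [MeasurableSpace α'] [MeasurableSpace β'] [MeasurableSpace γ']
    (μ : Measure Ω) [IsFiniteMeasure μ] (U : Ω → α) (V : Ω → β) (W : Ω → γ)
    (eU : α ≃ᵐ α') (eV : β ≃ᵐ β') (eW : γ ≃ᵐ γ') :
    condMI μ (fun ω => eU (U ω)) (fun ω => eV (V ω)) (fun ω => eW (W ω)) ≤ condMI μ U V W := by
  unfold condMI
  refine iSup_le fun k => iSup_le fun l => iSup_le fun f => iSup_le fun g =>
    iSup_le fun hf => iSup_le fun hg => ?_
  have e1 : mutInfo μ (fun ω => f (eU (U ω))) (fun ω => (g (eV (V ω)), eW (W ω)))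
      = mutInfo μ (fun ω => (f ∘ eU) (U ω)) (fun ω => ((g ∘ eV) (V ω), W ω)) :=
    mutInfo_comp_equiv μ (fun ω => (f ∘ eU) (U ω)) (fun ω => ((g ∘ eV) (V ω), W ω))
      (MeasurableEquiv.refl (Fin k)) ((MeasurableEquiv.refl (Fin l)).prodCongr eW)
  have e2 : mutInfo μ (fun ω => f (eU (U ω))) (fun ω => eW (W ω))
      = mutInfo μ (fun ω => (f ∘ eU) (U ω)) W :=
    mutInfo_comp_equiv μ (fun ω => (f ∘ eU) (U ω)) W (MeasurableEquiv.refl (Fin k)) eW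
  rw [e1, e2]
  exact le_iSup_of_le k (le_iSup_of_le l (le_iSup_of_le (f ∘ eU) (le_iSup_of_le (g ∘ eV)
    (le_iSup_of_le (hf.comp eU.measurable) (le_iSup_of_le (hg.comp eV.measurable) le_rfl)))))

lemma condMI_comp_equiv {α β γ α' β' γ' : Type*} [MeasurableSpace α] [MeasurableSpace β]
    [MeasurableSpace γ] [MeasurableSpace α'] [MeasurableSpace β'] [MeasurableSpace γ']
    (μ : Measure Ω) [IsFiniteMeasure μ] (U : Ω → α) (V : Ω → β) (W : Ω → γ)
    (eU : α ≃ᵐ α') (eV : β ≃ᵐ β') (eW : γ ≃ᵐ γ') :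
    condMI μ (fun ω => eU (U ω)) (fun ω => eV (V ω)) (fun ω => eW (W ω)) = condMI μ U V W := by
  refine le_antisymm (condMI_comp_equiv_le μ U V W eU eV eW) ?_
  have h := condMI_comp_equiv_le μ (fun ω => eU (U ω)) (fun ω => eV (V ω)) (fun ω => eW (W ω))
    eU.symm eV.symm eW.symm
  simpa only [MeasurableEquiv.symm_apply_apply] using h

end Aux

section Seg

lemma Partn.t_le {a b : ℝ} (P : Partn a b) : ∀ {i j : ℕ}, i ≤ j → j ≤ P.n → P.t i ≤ P.t j := by
  intro i j hij hj
  induction j with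
  | zero => rw [Nat.le_zero.mp hij]
  | succ m ih =>
    rcases Nat.lt_or_ge i (m + 1) with h | h
    · exact (ih (Nat.lt_succ_iff.mp h) (Nat.le_of_succ_le hj)).trans (P.mono m hj).le
    · rw [le_antisymm hij h]

/-- The order isomorphism `Ico s u ≃ Ico (φ s) (φ u)` induced by a strictly increasing
continuous `φ` on `[0, T]`, for `0 ≤ s ≤ u ≤ T`. -/
def segEquiv {T : ℝ} {φ : ℝ → ℝ} (hφmono : StrictMonoOn φ (Icc 0 T))
    (hφcont : ContinuousOn φ (Icc 0 T)) {s u : ℝ} (hs : 0 ≤ s) (hsu : s ≤ u) (hu : u ≤ T) :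
    Ico s u ≃ Ico (φ s) (φ u) :=
  Equiv.ofBijective
    (fun t => ⟨φ t.1,
      hφmono.monotoneOn ⟨hs, hsu.trans hu⟩ ⟨hs.trans t.2.1, t.2.2.le.trans hu⟩ t.2.1,
      hφmono ⟨hs.trans t.2.1, t.2.2.le.trans hu⟩ ⟨hs.trans hsu, hu⟩ t.2.2⟩)
    ⟨fun t1 t2 h12 => Subtype.ext (hφmono.injOn ⟨hs.trans t1.2.1, t1.2.2.le.trans hu⟩
        ⟨hs.trans t2.2.1, t2.2.2.le.trans hu⟩ (congrArg Subtype.val h12)),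
     fun r => by
      obtain ⟨t, ht, hφt⟩ := intermediate_value_Icc hsu
        (hφcont.mono (Icc_subset_Icc hs hu)) ⟨r.2.1, r.2.2.le⟩
      have htu : t < u := by
        have h2 : φ t < φ u := by rw [hφt]; exact r.2.2
        by_contra hc
        push_neg at hc
        exact absurd h2 (not_lt.mpr (hφmono.monotoneOn ⟨hs.trans hsu, hu⟩
          ⟨hs.trans ht.1, ht.2.trans hu⟩ hc))
      exact ⟨⟨t, ht.1, htu⟩, Subtype.ext hφt⟩⟩

lemma seg_dilate {E : Type*} {T : ℝ} {φ : ℝ → ℝ}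
    (hφmono : StrictMonoOn φ (Icc 0 T)) (hφcont : ContinuousOn φ (Icc 0 T))
    [MeasurableSpace E] (Z Z' : ℝ → Ω → E)
    (hZ' : ∀ t, 0 ≤ t → t < T → ∀ ω, Z' (φ t) ω = Z t ω)
    {s u : ℝ} (hs : 0 ≤ s) (hsu : s ≤ u) (hu : u ≤ T) :
    seg Z' (φ s) (φ u) = fun ω =>
      (MeasurableEquiv.arrowCongr' (segEquiv hφmono hφcont hs hsu hu) (MeasurableEquiv.refl E))
        (seg Z s u ω) := by
  funext ω a
  set t := (segEquiv hφmono hφcont hs hsu hu).symm a with hta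
  have h1 : (segEquiv hφmono hφcont hs hsu hu) t = a := Equiv.apply_symm_apply _ a
  have h2 : φ (t : ℝ) = (a : ℝ) := congrArg Subtype.val h1
  show Z' (a : ℝ) ω = Z (t : ℝ) ω
  rw [← h2]
  exact hZ' _ (hs.trans t.2.1) (lt_of_lt_of_le t.2.2 hu) ω

lemma condMI_seg {E F : Type*} [MeasurableSpace E] [MeasurableSpace F]
    (μ : Measure Ω) [IsFiniteMeasure μ] {T : ℝ} {φ : ℝ → ℝ}
    (hφmono : StrictMonoOn φ (Icc 0 T)) (hφcont : ContinuousOn φ (Icc 0 T))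
    (X X' : ℝ → Ω → E) (Y Y' : ℝ → Ω → F)
    (hX' : ∀ t, 0 ≤ t → t < T → ∀ ω, X' (φ t) ω = X t ω)
    (hY' : ∀ t, 0 ≤ t → t < T → ∀ ω, Y' (φ t) ω = Y t ω)
    {s u : ℝ} (hs : 0 ≤ s) (hsu : s ≤ u) (hu : u ≤ T) :
    condMI μ (seg Y' (φ s) (φ u)) (seg X' (φ 0) (φ u)) (seg Y' (φ 0) (φ s))
      = condMI μ (seg Y s u) (seg X 0 u) (seg Y 0 s) := by
  rw [seg_dilate hφmono hφcont Y Y' hY' hs hsu hu,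
    seg_dilate hφmono hφcont X X' hX' le_rfl (hs.trans hsu) hu,
    seg_dilate hφmono hφcont Y Y' hY' le_rfl hs (hsu.trans hu)]
  exact condMI_comp_equiv μ _ _ _ _ _ _

end Seg

lemma dInfo_dilate {E F : Type*} [MeasurableSpace E] [MeasurableSpace F]
    (μ : Measure Ω) [IsProbabilityMeasure μ] (T : ℝ) (hT : 0 < T)
    (X X' : ℝ → Ω → E) (Y Y' : ℝ → Ω → F) (φ : ℝ → ℝ)
    (hφmono : StrictMonoOn φ (Icc 0 T)) (hφcont : ContinuousOn φ (Icc 0 T))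
    (hX' : ∀ t, 0 ≤ t → t < T → ∀ ω, X' (φ t) ω = X t ω)
    (hY' : ∀ t, 0 ≤ t → t < T → ∀ ω, Y' (φ t) ω = Y t ω) :
    dInfo μ X Y 0 T = dInfo μ X' Y' (φ 0) (φ T) := by
  have h0T : (0 : ℝ) ≤ T := hT.le
  have key : ∀ s u : ℝ, 0 ≤ s → s ≤ u → u ≤ T →
      condMI μ (seg Y' (φ s) (φ u)) (seg X' (φ 0) (φ u)) (seg Y' (φ 0) (φ s))
        = condMI μ (seg Y s u) (seg X 0 u) (seg Y 0 s) :=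
    fun s u hs hsu hu => condMI_seg μ hφmono hφcont X X' Y Y' hX' hY' hs hsu hu
  apply le_antisymm
  · -- `dInfo μ X Y 0 T ≤ dInfo μ X' Y' (φ 0) (φ T)`
    refine le_iInf fun Q => ?_
    have hsurj : ∀ i, i ≤ Q.n → ∃ t ∈ Icc (0 : ℝ) T, φ t = Q.t i := by
      intro i hi
      have h1 : Q.t i ∈ Icc (φ 0) (φ T) := by
        constructor
        · have h := Q.t_le (Nat.zero_le i) hi; rwa [Q.first] at h
        · have h := Q.t_le hi le_rfl; rwa [Q.last] at h
      obtain ⟨t, ht, hφt⟩ := intermediate_value_Icc h0T hφcont h1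
      exact ⟨t, ht, hφt⟩
    set s : ℕ → ℝ := fun i => if h : i ≤ Q.n then (hsurj i h).choose else T with hs_def
    have hmem : ∀ i, i ≤ Q.n → s i ∈ Icc (0 : ℝ) T ∧ φ (s i) = Q.t i := by
      intro i h
      simp only [hs_def, dif_pos h]
      exact ⟨(hsurj i h).choose_spec.1, (hsurj i h).choose_spec.2⟩
    have hmono : ∀ i < Q.n, s i < s (i + 1) := by
      intro i hi
      have h1 := hmem i hi.le
      have h2 := hmem (i + 1) hi
      by_contra hle
      push_neg at hle
      have h3 := hφmono.monotoneOn h2.1 h1.1 hle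
      rw [h1.2, h2.2] at h3
      exact absurd (Q.mono i hi) (not_lt.mpr h3)
    have hfirst : s 0 = 0 := by
      have h := hmem 0 (Nat.zero_le _)
      exact hφmono.injOn h.1 ⟨le_rfl, h0T⟩ (by rw [h.2, Q.first])
    have hlast : s Q.n = T := by
      have h := hmem Q.n le_rfl
      exact hφmono.injOn h.1 ⟨h0T, le_rfl⟩ (by rw [h.2, Q.last])
    refine (iInf_le _ (⟨Q.n, s, hmono, hfirst, hlast⟩ : Partn 0 T)).trans (le_of_eq ?_)
    unfold dInfoP
    refine Finset.sum_congr rfl fun i hi => ?_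
    rw [Finset.mem_range] at hi
    have h1 := hmem i hi.le
    have h2 := hmem (i + 1) hi
    rw [show Q.t i = φ (s i) from h1.2.symm, show Q.t (i + 1) = φ (s (i + 1)) from h2.2.symm]
    exact (key (s i) (s (i + 1)) h1.1.1 (hmono i hi).le h2.1.2).symm
  · -- `dInfo μ X' Y' (φ 0) (φ T) ≤ dInfo μ X Y 0 T`
    refine le_iInf fun P => ?_
    have hbd : ∀ i, i ≤ P.n → P.t i ∈ Icc (0 : ℝ) T := by
      intro i hi
      constructor
      · have h := P.t_le (Nat.zero_le i) hi; rwa [P.first] at h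
      · have h := P.t_le hi le_rfl; rwa [P.last] at h
    refine (iInf_le _ (⟨P.n, fun i => φ (P.t i),
      fun i hi => hφmono (hbd i hi.le) (hbd (i + 1) hi) (P.mono i hi),
      congrArg φ P.first, congrArg φ P.last⟩ : Partn (φ 0) (φ T))).trans (le_of_eq ?_)
    unfold dInfoP
    refine Finset.sum_congr rfl fun i hi => ?_
    rw [Finset.mem_range] at hi
    exact key (P.t i) (P.t (i + 1)) (hbd i hi.le).1 (P.mono i hi).le (hbd (i + 1) hi).2

/-- Directed information is invariant to time dilation: if `φ` is
strictly increasing and continuous on `[0,T]` and `(X̃_{φ(t)}, Ỹ_{φ(t)}) = (X_t, Y_t)`,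
then `I(X_0^T → Y_0^T) = I(X̃_{φ(0)}^{φ(T)} → Ỹ_{φ(0)}^{φ(T)})`; in particular, for
`α > 0`, `I(X̃_0^{T/α} → Ỹ_0^{T/α}) = I(X_0^T → Y_0^T)` where `X̃_t = X_{tα}`,
`Ỹ_t = Y_{tα}`. -/
theorem dInfo_time_dilation {E F : Type*} [MeasurableSpace E] [MeasurableSpace F]
    (μ : Measure Ω) [IsProbabilityMeasure μ] (T : ℝ) (hT : 0 < T)
    (X X' : ℝ → Ω → E) (Y Y' : ℝ → Ω → F) (φ : ℝ → ℝ)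
    (hφmono : StrictMonoOn φ (Icc 0 T)) (hφcont : ContinuousOn φ (Icc 0 T))
    (hX' : ∀ t, 0 ≤ t → t < T → ∀ ω, X' (φ t) ω = X t ω)
    (hY' : ∀ t, 0 ≤ t → t < T → ∀ ω, Y' (φ t) ω = Y t ω) :
    dInfo μ X Y 0 T = dInfo μ X' Y' (φ 0) (φ T) ∧
      ∀ α : ℝ, 0 < α →
        dInfo μ (fun t ω => X (t * α) ω) (fun t ω => Y (t * α) ω) 0 (T / α)
          = dInfo μ X Y 0 T := by
  constructor
  · exact dInfo_dilate μ T hT X X' Y Y' φ hφmono hφcont hX' hY'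
  · intro α hα
    have hT' : 0 < T / α := div_pos hT hα
    have h := dInfo_dilate μ (T / α) hT' (fun t ω => X (t * α) ω) X
      (fun t ω => Y (t * α) ω) Y (fun t => t * α)
      ((strictMono_mul_right_of_pos hα).strictMonoOn _)
      ((continuous_id.mul continuous_const).continuousOn)
      (fun t _ _ ω => rfl) (fun t _ _ ω => rfl)
    simpa [zero_mul, div_mul_cancel₀ _ hα.ne'] using h

end CTDI
end
end

section
/- Let X be a positive finite-valued random variable with pmf p_X, and define g(t) = (Σ_x x e^{−tx} p_X(x)) / (Σ_x e^{−tx} p_X(x)) for t ≥ 0. Let τ be a nonnegative random variable with density f_τ(t) = (Σ_x e^{−tx} p_X(x)) / E[1/X] for t ≥ 0, and let Y have density f_Y(y) = Σ_x p_X(x) x e^{−xy} for y ≥ 0 (the mixture of exponentials with rates X). Then E[g(τ) log g(τ)] = (1 − h(Y)) / E[1/X], where h(Y) = −∫_0^∞ f_Y(y) log f_Y(y) dy is the differential entropy of Y. -/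
open MeasureTheory Real Set Filter

set_option maxHeartbeats 1000000

/-- Let `X` be a positive finite-valued random variable with pmf `p`
supported on the finite set `S`, let
`g(t) = (Σ_x x e^{-tx} p(x)) / (Σ_x e^{-tx} p(x))`, let `τ` have density
`f_τ(t) = (Σ_x e^{-tx} p(x)) / E[1/X]` on `t ≥ 0`, and let `Y` have density
`f_Y(y) = Σ_x p(x) x e^{-xy}` on `y ≥ 0`.  Then
`E[g(τ) log g(τ)] = (1 - h(Y)) / E[1/X]`, where `h(Y) = -∫_0^∞ f_Y log f_Y`. -/
theorem expectation_g_log_g (S : Finset ℝ) (p : ℝ → ℝ)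
    (hSpos : ∀ x ∈ S, 0 < x) (hpnn : ∀ x ∈ S, 0 ≤ p x) (hpsum : ∑ x ∈ S, p x = 1)
    (g fτ fY : ℝ → ℝ)
    (hg : ∀ t : ℝ, g t =
      (∑ x ∈ S, x * Real.exp (-t * x) * p x) / (∑ x ∈ S, Real.exp (-t * x) * p x))
    (hfτ : ∀ t : ℝ, fτ t =
      (∑ x ∈ S, Real.exp (-t * x) * p x) / (∑ x ∈ S, p x / x))
    (hfY : ∀ y : ℝ, fY y = ∑ x ∈ S, p x * x * Real.exp (-x * y)) :
    ∫ t in Ioi (0 : ℝ), fτ t * (g t * Real.log (g t))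
      = (1 - (-∫ y in Ioi (0 : ℝ), fY y * Real.log (fY y)))
        / (∑ x ∈ S, p x / x) := by
  -- basic setup
  set den : ℝ → ℝ := fun t => ∑ x ∈ S, Real.exp (-t * x) * p x with hdendef
  set E : ℝ := ∑ x ∈ S, p x / x with hEdef
  obtain ⟨x0, hx0S, hp0⟩ : ∃ x ∈ S, 0 < p x := by
    by_contra h
    push_neg at h
    have : ∑ x ∈ S, p x = 0 :=
      Finset.sum_eq_zero fun x hx => le_antisymm (h x hx) (hpnn x hx)
    linarith
  have hx0 : 0 < x0 := hSpos _ hx0S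
  have hSne : S.Nonempty := ⟨x0, hx0S⟩
  have hp0le : p x0 ≤ 1 := by
    rw [← hpsum]; exact Finset.single_le_sum (fun x hx => hpnn x hx) hx0S
  set m : ℝ := S.min' hSne with hmdef
  have hm : 0 < m := hSpos _ (S.min'_mem hSne)
  have hmle : ∀ x ∈ S, m ≤ x := fun x hx => S.min'_le x hx
  have hE : 0 < E := by
    rw [hEdef]
    apply Finset.sum_pos'
    · exact fun x hx => div_nonneg (hpnn x hx) (hSpos x hx).le
    · exact ⟨x0, hx0S, div_pos hp0 hx0⟩
  have hdenpos : ∀ t, 0 < den t := by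
    intro t
    apply Finset.sum_pos'
    · exact fun x hx => mul_nonneg (Real.exp_pos _).le (hpnn x hx)
    · exact ⟨x0, hx0S, mul_pos (Real.exp_pos _) hp0⟩
  have hfYpos : ∀ t, 0 < fY t := by
    intro t
    rw [hfY]
    apply Finset.sum_pos'
    · exact fun x hx => mul_nonneg (mul_nonneg (hpnn x hx) (hSpos x hx).le) (Real.exp_pos _).le
    · exact ⟨x0, hx0S, mul_pos (mul_pos hp0 hx0) (Real.exp_pos _)⟩
  -- fY equals the numerator of g
  have hnum : ∀ t, (∑ x ∈ S, x * Real.exp (-t * x) * p x) = fY t := by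
    intro t
    rw [hfY]
    apply Finset.sum_congr rfl
    intro x _
    ring_nf
  -- upper bound on fY
  set C : ℝ := ∑ x ∈ S, p x * x with hCdef
  have hC : 0 < C :=
    Finset.sum_pos' (fun x hx => mul_nonneg (hpnn x hx) (hSpos x hx).le)
      ⟨x0, hx0S, mul_pos hp0 hx0⟩
  have hfY_ub : ∀ t, 0 ≤ t → fY t ≤ C * Real.exp (-m * t) := by
    intro t ht
    rw [hfY, hCdef, Finset.sum_mul]
    apply Finset.sum_le_sum
    intro x hx
    have : Real.exp (-x * t) ≤ Real.exp (-m * t) := by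
      apply Real.exp_le_exp.2
      nlinarith [hmle x hx]
    exact mul_le_mul_of_nonneg_left this (mul_nonneg (hpnn x hx) (hSpos x hx).le)
  -- lower bounds
  have hfY_lb : ∀ t, p x0 * x0 * Real.exp (-x0 * t) ≤ fY t := by
    intro t
    rw [hfY]
    exact Finset.single_le_sum (f := fun x => p x * x * Real.exp (-x * t))
      (fun x hx => mul_nonneg (mul_nonneg (hpnn x hx) (hSpos x hx).le) (Real.exp_pos _).le) hx0S
  have hden_lb : ∀ t, Real.exp (-t * x0) * p x0 ≤ den t := by
    intro t
    exact Finset.single_le_sum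
      (fun x hx => mul_nonneg (Real.exp_pos _).le (hpnn x hx)) hx0S
  have hden_ub : ∀ t, 0 ≤ t → den t ≤ 1 := by
    intro t ht
    rw [← hpsum]
    apply Finset.sum_le_sum
    intro x hx
    have h1 : Real.exp (-t * x) ≤ 1 := by
      rw [Real.exp_le_one_iff]
      nlinarith [hSpos x hx]
    nlinarith [hpnn x hx, Real.exp_pos (-t * x)]
  -- log bounds
  set A : ℝ := |Real.log C| + |Real.log (p x0 * x0)| + |Real.log (p x0)| with hAdef
  have hA : 0 ≤ A := by positivity
  have hlog_fY : ∀ t, 0 ≤ t → |Real.log (fY t)| ≤ A + x0 * t := by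
    intro t ht
    rw [abs_le]
    constructor
    · have h1 := hfY_lb t
      have h2 : Real.log (p x0 * x0 * Real.exp (-x0 * t)) ≤ Real.log (fY t) :=
        Real.log_le_log (by positivity) h1
      rw [Real.log_mul (by positivity) (Real.exp_ne_zero _), Real.log_exp] at h2
      have : -|Real.log (p x0 * x0)| ≤ Real.log (p x0 * x0) := neg_abs_le _
      nlinarith [abs_nonneg (Real.log C), abs_nonneg (Real.log (p x0)), hx0]
    · have h2 : Real.log (fY t) ≤ Real.log C :=
        Real.log_le_log (hfYpos t) (by
          have := hfY_ub t ht
          have h3 : Real.exp (-m * t) ≤ 1 := by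
            rw [Real.exp_le_one_iff]; nlinarith
          nlinarith)
      have : Real.log C ≤ |Real.log C| := le_abs_self _
      nlinarith [abs_nonneg (Real.log (p x0 * x0)), abs_nonneg (Real.log (p x0)), hx0]
  have hlog_den : ∀ t, 0 ≤ t → |Real.log (den t)| ≤ A + x0 * t := by
    intro t ht
    rw [abs_le]
    constructor
    · have h1 := hden_lb t
      have h2 : Real.log (Real.exp (-t * x0) * p x0) ≤ Real.log (den t) :=
        Real.log_le_log (by positivity) h1
      rw [Real.log_mul (Real.exp_ne_zero _) (ne_of_gt hp0), Real.log_exp] at h2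
      have : -|Real.log (p x0)| ≤ Real.log (p x0) := neg_abs_le _
      nlinarith [abs_nonneg (Real.log C), abs_nonneg (Real.log (p x0 * x0)), hx0]
    · have h2 : Real.log (den t) ≤ 0 := Real.log_nonpos (hdenpos t).le (hden_ub t ht)
      nlinarith [hx0]
  -- dominating function
  set G : ℝ → ℝ := fun t => C * A * Real.exp (-m * t) + C * x0 * (2 / m) * Real.exp (-(m / 2) * t)
    with hGdef
  have hGint : IntegrableOn G (Ioi 0) := by
    apply Integrable.add
    · exact (exp_neg_integrableOn_Ioi 0 hm).const_mul _
    · exact (exp_neg_integrableOn_Ioi 0 (by linarith : (0:ℝ) < m / 2)).const_mul _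
  have hbound : ∀ t, 0 ≤ t → C * Real.exp (-m * t) * (A + x0 * t) ≤ G t := by
    intro t ht
    have key : t ≤ 2 / m * Real.exp (m / 2 * t) := by
      have h1 : m / 2 * t ≤ Real.exp (m / 2 * t) := by
        have := Real.add_one_le_exp (m / 2 * t)
        linarith
      calc t = 2 / m * (m / 2 * t) := by field_simp
        _ ≤ 2 / m * Real.exp (m / 2 * t) := by
            apply mul_le_mul_of_nonneg_left h1; positivity
    have h3 : C * Real.exp (-m * t) * (x0 * t) ≤ C * x0 * (2 / m) * Real.exp (-(m / 2) * t) := by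
      have h4 := mul_le_mul_of_nonneg_left key
        (show (0:ℝ) ≤ C * x0 * Real.exp (-m * t) by positivity)
      calc C * Real.exp (-m * t) * (x0 * t) = C * x0 * Real.exp (-m * t) * t := by ring
        _ ≤ C * x0 * Real.exp (-m * t) * (2 / m * Real.exp (m / 2 * t)) := h4
        _ = C * x0 * (2 / m) * (Real.exp (-m * t) * Real.exp (m / 2 * t)) := by ring
        _ = C * x0 * (2 / m) * Real.exp (-(m / 2) * t) := by
            rw [← Real.exp_add]; congr 1; ring
    have h5 : C * Real.exp (-m * t) * (A + x0 * t)
        = C * A * Real.exp (-m * t) + C * Real.exp (-m * t) * (x0 * t) := by ring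
    rw [hGdef]
    simp only
    linarith
  -- continuity
  have hfYcont : Continuous fY := by
    have : fY = fun y => ∑ x ∈ S, p x * x * Real.exp (-x * y) := funext hfY
    rw [this]
    exact continuous_finset_sum _ fun x _ => by fun_prop
  have hdencont : Continuous den := by
    exact continuous_finset_sum _ fun x _ => by fun_prop
  have hlogfYcont : Continuous fun t => Real.log (fY t) := by
    rw [continuous_iff_continuousAt]
    intro t
    exact (Real.continuousAt_log (ne_of_gt (hfYpos t))).comp hfYcont.continuousAt
  have hlogdencont : Continuous fun t => Real.log (den t) := by
    rw [continuous_iff_continuousAt]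
    intro t
    exact (Real.continuousAt_log (ne_of_gt (hdenpos t))).comp hdencont.continuousAt
  -- integrability of fY * log fY
  have hI1int : IntegrableOn (fun t => fY t * Real.log (fY t)) (Ioi 0) := by
    apply Integrable.mono' hGint ((hfYcont.mul hlogfYcont).aestronglyMeasurable)
    rw [ae_restrict_iff' measurableSet_Ioi]
    apply ae_of_all
    intro t ht
    have ht' : 0 ≤ t := le_of_lt ht
    rw [Pi.mul_apply, norm_mul, Real.norm_eq_abs, Real.norm_eq_abs, abs_of_pos (hfYpos t)]
    calc fY t * |Real.log (fY t)| ≤ (C * Real.exp (-m * t)) * (A + x0 * t) := by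
          apply mul_le_mul (hfY_ub t ht') (hlog_fY t ht') (abs_nonneg _) (by positivity)
      _ ≤ G t := hbound t ht'
  have hI2int : IntegrableOn (fun t => fY t * Real.log (den t)) (Ioi 0) := by
    apply Integrable.mono' hGint ((hfYcont.mul hlogdencont).aestronglyMeasurable)
    rw [ae_restrict_iff' measurableSet_Ioi]
    apply ae_of_all
    intro t ht
    have ht' : 0 ≤ t := le_of_lt ht
    rw [Pi.mul_apply, norm_mul, Real.norm_eq_abs, Real.norm_eq_abs, abs_of_pos (hfYpos t)]
    calc fY t * |Real.log (den t)| ≤ (C * Real.exp (-m * t)) * (A + x0 * t) := by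
          apply mul_le_mul (hfY_ub t ht') (hlog_den t ht') (abs_nonneg _) (by positivity)
      _ ≤ G t := hbound t ht'
  -- derivative of den
  have hden' : ∀ t, HasDerivAt den (-(fY t)) t := by
    intro t
    have h : HasDerivAt (fun t => ∑ x ∈ S, Real.exp (-t * x) * p x)
        (∑ x ∈ S, Real.exp (-t * x) * (-1 * x) * p x) t := by
      apply HasDerivAt.fun_sum
      intro x _
      exact (((hasDerivAt_id t).neg.mul_const x).exp).mul_const (p x)
    have h2 : (∑ x ∈ S, Real.exp (-t * x) * (-1 * x) * p x) = -(fY t) := by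
      rw [hfY, ← Finset.sum_neg_distrib]
      apply Finset.sum_congr rfl
      intro x _
      ring
    rw [h2] at h
    exact h
  -- FTC: ∫ fY * log den = -1
  have hFderiv : ∀ t, HasDerivAt (fun t => den t - den t * Real.log (den t))
      (fY t * Real.log (den t)) t := by
    intro t
    have h1 : HasDerivAt (fun t => den t * Real.log (den t))
        ((Real.log (den t) + 1) * (-(fY t))) t :=
      (Real.hasDerivAt_mul_log (ne_of_gt (hdenpos t))).comp t (hden' t)
    have h2 := (hden' t).fun_sub h1
    exact h2.congr_deriv (by ring)
  have hden_tendsto : Tendsto den atTop (nhds 0) := by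
    have : Tendsto (fun t : ℝ => ∑ x ∈ S, Real.exp (-t * x) * p x) atTop
        (nhds (∑ x ∈ S, (0 : ℝ))) := by
      apply tendsto_finset_sum
      intro x hx
      have hx' : 0 < x := hSpos x hx
      have h1 : Tendsto (fun t : ℝ => t * x) atTop atTop :=
        tendsto_id.atTop_mul_const hx'
      have h2 : Tendsto (fun t : ℝ => Real.exp (-(t * x))) atTop (nhds 0) :=
        Real.tendsto_exp_neg_atTop_nhds_zero.comp h1
      have h3 : Tendsto (fun t : ℝ => Real.exp (-t * x)) atTop (nhds 0) :=
        h2.congr fun t => by rw [neg_mul]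
      simpa only [zero_mul] using h3.mul_const (p x)
    simpa only [Finset.sum_const_zero] using this
  have hF_tendsto : Tendsto (fun t => den t - den t * Real.log (den t)) atTop (nhds 0) := by
    have h1 : Tendsto (fun t => den t * Real.log (den t)) atTop (nhds (0 * Real.log 0)) :=
      (Real.continuous_mul_log.tendsto 0).comp hden_tendsto
    simp only [Real.log_zero, mul_zero] at h1
    simpa using hden_tendsto.sub h1
  have hden0 : den 0 = 1 := by
    rw [hdendef]
    simp only [neg_zero, zero_mul, Real.exp_zero, one_mul]
    exact hpsum
  have hI2 : ∫ t in Ioi (0:ℝ), fY t * Real.log (den t) = -1 := by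
    have := integral_Ioi_of_hasDerivAt_of_tendsto
      (f := fun t => den t - den t * Real.log (den t))
      (f' := fun t => fY t * Real.log (den t)) (a := 0) (m := 0)
      ((hFderiv 0).continuousAt.continuousWithinAt)
      (fun t _ => hFderiv t) hI2int hF_tendsto
    simpa [hden0] using this
  -- pointwise identity for the integrand
  have hpt : ∀ t, fτ t * (g t * Real.log (g t))
      = (fY t * Real.log (fY t) - fY t * Real.log (den t)) / E := by
    intro t
    rw [hfτ, hg, hnum t]
    have hds : (∑ x ∈ S, Real.exp (-t * x) * p x) = den t := rfl
    rw [hds, Real.log_div (ne_of_gt (hfYpos t)) (ne_of_gt (hdenpos t))]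
    have hdt : den t ≠ 0 := ne_of_gt (hdenpos t)
    have hEne : E ≠ 0 := ne_of_gt hE
    field_simp
  -- assemble
  calc ∫ t in Ioi (0:ℝ), fτ t * (g t * Real.log (g t))
      = ∫ t in Ioi (0:ℝ), (fY t * Real.log (fY t) - fY t * Real.log (den t)) / E := by
        simp only [hpt]
    _ = (∫ t in Ioi (0:ℝ), (fY t * Real.log (fY t) - fY t * Real.log (den t))) / E := by
        rw [integral_div]
    _ = ((∫ t in Ioi (0:ℝ), fY t * Real.log (fY t))
          - ∫ t in Ioi (0:ℝ), fY t * Real.log (den t)) / E := by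
        rw [integral_sub hI1int hI2int]
    _ = (1 - (-∫ y in Ioi (0:ℝ), fY y * Real.log (fY y))) / E := by
        rw [hI2]; ring_nf
end

section
/- Fix ε > 0 and T > 0, and let (X_0^T, Y_0^T) be jointly distributed processes such that the channel input is a delayed version of the output: X_t = Y_{t−ε} for t ∈ [ε, T) and X_t = 0 for t ∈ [0, ε) (more generally, such that for every t, X_0^t is measurable with respect to σ(Y_0^{max(t−ε,0)})). Then I_t(X_0^T → Y_0^T) = 0 for every finite partition t of [0,T) with mesh max_i (t_i − t_{i−1}) ≤ ε, and consequently the directed information satisfies I(X_0^T → Y_0^T) = 0. -/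
open MeasureTheory ProbabilityTheory Real Set
open scoped ENNReal NNReal

noncomputable section


namespace CTDI

variable {Ω : Type*} [MeasurableSpace Ω]

section Aux

/-- `D(0 ‖ Q) = 0`. -/
lemma relEnt_zero_left {α : Type*} [MeasurableSpace α] (Q : Measure α) :
    relEnt (0 : Measure α) Q = 0 := by
  rw [relEnt, if_pos ⟨Measure.AbsolutelyContinuous.zero Q, integrable_zero_measure⟩]
  simp

/-- Relative entropy is invariant under pushforward by a measurable embedding. -/
lemma relEnt_map {γ δ : Type*} [MeasurableSpace γ] [MeasurableSpace δ]
    (P Q : Measure γ) [SigmaFinite P] [SigmaFinite Q] {e : γ → δ}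
    (he : MeasurableEmbedding e) :
    relEnt (P.map e) (Q.map e) = relEnt P Q := by
  have hacmp : P.map e ≪ Q.map e → P ≪ Q := by
    intro hac
    refine Measure.AbsolutelyContinuous.mk fun s hs hQs => ?_
    have h1 : Q.map e (e '' s) = 0 := by
      rw [he.map_apply, he.injective.preimage_image, hQs]
    have h2 := hac h1
    rwa [he.map_apply, he.injective.preimage_image] at h2
  by_cases hPQ : P ≪ Q
  · have hac : P.map e ≪ Q.map e := he.absolutelyContinuous_map hPQ
    have hrn : (fun x => Real.log ((P.map e).rnDeriv (Q.map e) (e x)).toReal)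
        =ᵐ[P] fun x => Real.log (P.rnDeriv Q x).toReal := by
      filter_upwards [(he.rnDeriv_map P Q).filter_mono hPQ.ae_le] with x hx
      rw [hx]
    have hint : Integrable (fun x => Real.log ((P.map e).rnDeriv (Q.map e) x).toReal) (P.map e)
        ↔ Integrable (fun x => Real.log (P.rnDeriv Q x).toReal) P := by
      rw [he.integrable_map_iff]
      exact integrable_congr hrn
    by_cases hI : Integrable (fun x => Real.log (P.rnDeriv Q x).toReal) P
    · rw [relEnt, relEnt, if_pos ⟨hac, hint.mpr hI⟩, if_pos ⟨hPQ, hI⟩]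
      congr 1
      rw [he.integral_map (fun x => Real.log ((P.map e).rnDeriv (Q.map e) x).toReal)]
      exact integral_congr_ae hrn
    · rw [relEnt, relEnt, if_neg (fun h => hI (hint.mp h.2)), if_neg (fun h => hI h.2)]
  · rw [relEnt, relEnt, if_neg (fun h => hPQ (hacmp h.1)), if_neg (fun h => hPQ h.1)]

/-- Mutual information is invariant under composing the second argument with a
measurable embedding that admits a measurable left inverse. -/
lemma mutInfo_comp_embedding {α γ δ : Type*} [MeasurableSpace α] [MeasurableSpace γ]
    [MeasurableSpace δ] (μ : Measure Ω) [IsProbabilityMeasure μ] (A : Ω → α) (B : Ω → γ)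
    {e : γ → δ} (he : MeasurableEmbedding e) {pr : δ → γ} (hpr : Measurable pr)
    (hpre : ∀ x, pr (e x) = x) :
    mutInfo μ A (fun ω => e (B ω)) = mutInfo μ A B := by
  by_cases h : AEMeasurable (fun ω => (A ω, B ω)) μ
  · have hA : AEMeasurable A μ := measurable_fst.comp_aemeasurable h
    have hB : AEMeasurable B μ := measurable_snd.comp_aemeasurable h
    have hm : Measurable (Prod.map (id : α → α) e) := measurable_id.prodMap he.measurable
    have h1 : μ.map (fun ω => (A ω, e (B ω))) = (μ.map (fun ω => (A ω, B ω))).map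
        (Prod.map (id : α → α) e) :=
      (AEMeasurable.map_map_of_aemeasurable hm.aemeasurable h).symm
    have h2 : μ.map (fun ω => e (B ω)) = (μ.map B).map e :=
      (AEMeasurable.map_map_of_aemeasurable he.measurable.aemeasurable hB).symm
    haveI : IsProbabilityMeasure (μ.map A) := Measure.isProbabilityMeasure_map hA
    haveI : IsProbabilityMeasure (μ.map B) := Measure.isProbabilityMeasure_map hB
    haveI : IsProbabilityMeasure (μ.map (fun ω => (A ω, B ω))) := Measure.isProbabilityMeasure_map h
    have h3 : (μ.map A).prod ((μ.map B).map e)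
        = ((μ.map A).prod (μ.map B)).map (Prod.map (id : α → α) e) := by
      have h4 := Measure.map_prod_map (μ.map A) (μ.map B) measurable_id he.measurable
      rwa [Measure.map_id] at h4
    rw [mutInfo, mutInfo, h1, h2, h3]
    exact relEnt_map _ _ (MeasurableEmbedding.id.prodMap he)
  · have h' : ¬ AEMeasurable (fun ω => (A ω, e (B ω))) μ := by
      intro hc
      apply h
      have hc2 : AEMeasurable (fun ω => (A ω, pr (e (B ω)))) μ :=
        (measurable_id.prodMap hpr).comp_aemeasurable hc
      simpa [hpre] using hc2
    rw [mutInfo, mutInfo, Measure.map_of_not_aemeasurable h,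
      Measure.map_of_not_aemeasurable h', relEnt_zero_left, relEnt_zero_left]

/-- The graph map `w ↦ (h w, w)` of a measurable function into a countable discrete
space is a measurable embedding. -/
lemma measurableEmbedding_graph {γ κ : Type*} [MeasurableSpace γ] [MeasurableSpace κ]
    [Countable κ] [MeasurableSingletonClass κ] {h : γ → κ} (hh : Measurable h) :
    MeasurableEmbedding (fun w => ((h w, w) : κ × γ)) where
  injective := fun a b hab => congrArg Prod.snd hab
  measurable := hh.prodMk measurable_id
  measurableSet_image' := by
    intro s hs
    have himg : (fun w => ((h w, w) : κ × γ)) '' s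
        = ⋃ c : κ, ({c} : Set κ) ×ˢ (s ∩ h ⁻¹' {c}) := by
      ext ⟨x, y⟩
      simp only [mem_image, mem_iUnion, mem_prod, mem_singleton_iff, mem_inter_iff,
        mem_preimage]
      constructor
      · rintro ⟨w, hws, heq⟩
        obtain ⟨hx, hy⟩ := Prod.mk.injEq _ _ _ _ ▸ heq
        subst hy
        exact ⟨h w, hx.symm, hws, rfl⟩
      · rintro ⟨c, hx, hys, hyc⟩
        exact ⟨y, hys, by rw [hyc, ← hx]⟩
    rw [himg]
    exact MeasurableSet.iUnion fun c =>
      (measurableSet_singleton c).prod (hs.inter (hh (measurableSet_singleton c)))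

/-- A finite-valued random variable measurable w.r.t. `σ(W)` factors through `W`
(Doob--Dynkin for finite codomain). -/
lemma exists_factor {γ κ : Type*} [MeasurableSpace γ] [MeasurableSpace κ] [Fintype κ] [LinearOrder κ] [Nonempty κ]
    {W : Ω → γ} {C : Ω → κ}
    (hC : ∀ c : κ, ∃ B : Set γ, MeasurableSet B ∧ W ⁻¹' B = C ⁻¹' {c}) :
    ∃ h : γ → κ, Measurable h ∧ ∀ ω, h (W ω) = C ω := by
  choose B hBm hB using hC
  set B' : κ → Set γ := fun c => B c \ ⋃ c' < c, B c' with hB'def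
  have hB'm : ∀ c, MeasurableSet (B' c) := fun c =>
    (hBm c).diff (MeasurableSet.iUnion fun c' => MeasurableSet.iUnion fun _ => hBm c')
  have huniq : ∀ {w c d}, w ∈ B' c → w ∈ B' d → c = d := by
    intro w c d hc hd
    by_contra hne
    rcases lt_or_gt_of_ne hne with hlt | hlt
    · exact hd.2 (mem_iUnion₂.mpr ⟨c, hlt, hc.1⟩)
    · exact hc.2 (mem_iUnion₂.mpr ⟨d, hlt, hd.1⟩)
  classical
  refine ⟨fun w => if hw : ∃ c, w ∈ B' c then hw.choose else Classical.arbitrary κ, ?_, ?_⟩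
  · have hval : ∀ w c, w ∈ B' c →
        (if hw : ∃ c, w ∈ B' c then hw.choose else Classical.arbitrary κ) = c := by
      intro w c hc
      have hw : ∃ c, w ∈ B' c := ⟨c, hc⟩
      rw [dif_pos hw]
      exact huniq hw.choose_spec hc
    apply measurable_to_countable'
    intro c
    by_cases hd : Classical.arbitrary κ = c
    · have hset : (fun w => if hw : ∃ c, w ∈ B' c then hw.choose else Classical.arbitrary κ)
          ⁻¹' {c} = B' c ∪ (⋃ d, B' d)ᶜ := by
        ext w
        simp only [mem_preimage, mem_singleton_iff, mem_union, mem_compl_iff, mem_iUnion]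
        constructor
        · intro hwc
          by_cases hw : ∃ c, w ∈ B' c
          · left
            rw [dif_pos hw] at hwc
            rw [← hwc]
            exact hw.choose_spec
          · right
            exact fun ⟨d, hd'⟩ => hw ⟨d, hd'⟩
        · rintro (hw | hw)
          · exact hval w c hw
          · rw [dif_neg (fun ⟨d, hd'⟩ => hw ⟨d, hd'⟩)]
            exact hd
      rw [hset]
      exact (hB'm c).union (MeasurableSet.iUnion hB'm).compl
    · have hset : (fun w => if hw : ∃ c, w ∈ B' c then hw.choose else Classical.arbitrary κ)
          ⁻¹' {c} = B' c := by
        ext w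
        simp only [mem_preimage, mem_singleton_iff]
        constructor
        · intro hwc
          by_cases hw : ∃ c, w ∈ B' c
          · rw [dif_pos hw] at hwc
            rw [← hwc]
            exact hw.choose_spec
          · rw [dif_neg hw] at hwc
            exact absurd hwc hd
        · exact fun hw => hval w c hw
      rw [hset]
      exact hB'm c
  · intro ω
    have h1 : ∀ d, W ω ∈ B d ↔ C ω = d := by
      intro d
      constructor
      · intro hWd
        have : ω ∈ W ⁻¹' B d := hWd
        rw [hB d] at this
        exact this
      · intro hCd
        have : ω ∈ C ⁻¹' {d} := hCd
        rw [← hB d] at this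
        exact this
    have hw : W ω ∈ B' (C ω) := by
      refine ⟨(h1 (C ω)).mpr rfl, ?_⟩
      intro hmem
      obtain ⟨c', hlt, hc'⟩ := mem_iUnion₂.mp hmem
      exact absurd ((h1 c').mp hc').symm (ne_of_lt hlt)
    have hex : ∃ c, W ω ∈ B' c := ⟨C ω, hw⟩
    show (if hw : ∃ c, W ω ∈ B' c then hw.choose else Classical.arbitrary κ) = C ω
    rw [dif_pos hex]
    exact huniq hex.choose_spec hw

/-- If `V` is measurable with respect to `σ(W)`, then `I(U;V|W) = 0`. -/
lemma condMI_eq_zero {α β γ : Type*} [MeasurableSpace α] [MeasurableSpace β]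
    [MeasurableSpace γ] (μ : Measure Ω) [IsProbabilityMeasure μ]
    (U : Ω → α) (V : Ω → β) (W : Ω → γ)
    (hVW : MeasurableSpace.comap V inferInstance ≤ MeasurableSpace.comap W inferInstance) :
    condMI μ U V W = 0 := by
  rw [condMI]
  refine le_antisymm ?_ zero_le
  refine iSup_le fun k => iSup_le fun l => iSup_le fun f => iSup_le fun g =>
    iSup_le fun hf => iSup_le fun hg => ?_
  have hΩ : Nonempty Ω := by
    by_contra hemp
    have huniv : (univ : Set Ω) = ∅ := by
      simpa [Set.eq_empty_iff_forall_notMem, isEmpty_iff] using fun ω => hemp ⟨ω⟩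
    have h0 : μ univ = 0 := by rw [huniv]; simp
    rw [measure_univ] at h0
    exact one_ne_zero h0
  haveI : Nonempty (Fin l) := ⟨g (V (Classical.arbitrary Ω))⟩
  have hC : ∀ c : Fin l, ∃ B : Set γ, MeasurableSet B ∧
      W ⁻¹' B = (fun ω => g (V ω)) ⁻¹' {c} := by
    intro c
    have hmem : MeasurableSet[MeasurableSpace.comap V inferInstance]
        ((fun ω => g (V ω)) ⁻¹' {c}) :=
      ⟨g ⁻¹' {c}, hg (measurableSet_singleton c), rfl⟩
    exact hVW _ hmem
  obtain ⟨h, hhm, hhW⟩ := exists_factor hC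
  have heq2 : (fun ω => ((g (V ω), W ω) : Fin l × γ))
      = fun ω => ((h (W ω), W ω) : Fin l × γ) := by
    funext ω
    rw [hhW ω]
  have key : mutInfo μ (fun ω => f (U ω)) (fun ω => ((g (V ω), W ω) : Fin l × γ))
      = mutInfo μ (fun ω => f (U ω)) W := by
    rw [heq2]
    exact mutInfo_comp_embedding (e := fun w => ((h w, w) : Fin l × γ)) μ
      (fun ω => f (U ω)) W (measurableEmbedding_graph hhm) measurable_snd (fun x => rfl)
  rw [key, tsub_self]

/-- Monotonicity of the σ-algebra generated by segments. -/
lemma comap_seg_mono {E : Type*} [MeasurableSpace E] (Z : ℝ → Ω → E) (c : ℝ) {a b : ℝ}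
    (hab : a ≤ b) :
    MeasurableSpace.comap (seg Z c a) inferInstance ≤
      MeasurableSpace.comap (seg Z c b) inferInstance := by
  have hres : seg Z c a = (fun (gfun : Ico c b → E) (s : Ico c a) =>
      gfun ⟨s.1, s.2.1, lt_of_lt_of_le s.2.2 hab⟩) ∘ seg Z c b := rfl
  have hmeas : Measurable (fun (gfun : Ico c b → E) (s : Ico c a) =>
      gfun ⟨s.1, s.2.1, lt_of_lt_of_le s.2.2 hab⟩) :=
    measurable_pi_lambda _ fun s => measurable_pi_apply _
  rw [hres, ← MeasurableSpace.comap_comp]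
  exact MeasurableSpace.comap_mono hmeas.comap_le

end Aux

/-- If the channel input is a delayed version of the output —
`X_t = Y_{t-ε}` for `t ≥ ε` and `X_t = 0` on `[0,ε)`, or more generally if for every
`t` the past `X_0^t` is measurable with respect to `σ(Y_0^{max(t-ε,0)})` — then
`I_t(X_0^T → Y_0^T) = 0` for every partition `t` of mesh at most `ε`, and consequently


`I(X_0^T → Y_0^T) = 0`. -/
theorem dInfo_zero_of_delayed_feedback {F : Type*} [MeasurableSpace F]
    (μ : Measure Ω) [IsProbabilityMeasure μ] (T ε : ℝ) (hT : 0 < T) (hε : 0 < ε)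
    (X Y : ℝ → Ω → F)
    (hdelay : ∀ t : ℝ, 0 ≤ t → t ≤ T →
      MeasurableSpace.comap (seg X 0 t) inferInstance ≤
        MeasurableSpace.comap (seg Y 0 (max (t - ε) 0)) inferInstance) :
    (∀ P : Partn 0 T, (∀ i < P.n, P.t (i + 1) - P.t i ≤ ε) → dInfoP μ X Y P = 0) ∧
      dInfo μ X Y 0 T = 0 := by
  have hmain : ∀ P : Partn 0 T, (∀ i < P.n, P.t (i + 1) - P.t i ≤ ε) → dInfoP μ X Y P = 0 := by
    intro P hmesh
    have hmono : ∀ j, j ≤ P.n → ∀ i, i ≤ j → P.t i ≤ P.t j := by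
      intro j
      induction j with
      | zero => intro _ i hi; rw [Nat.le_zero.mp hi]
      | succ j ih =>
        intro hj i hi
        rcases Nat.lt_succ_iff_lt_or_eq.mp (Nat.lt_succ_of_le hi) with hlt | heq
        · exact le_trans (ih (le_trans (Nat.le_succ j) hj) i (Nat.lt_succ_iff.mp hlt))
            (P.mono j (Nat.lt_of_succ_le hj)).le
        · rw [heq]
    rw [dInfoP]
    apply Finset.sum_eq_zero
    intro i hi
    have hin : i < P.n := Finset.mem_range.mp hi
    have h0i : (0:ℝ) ≤ P.t i := by
      have := hmono i hin.le 0 (Nat.zero_le i)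
      rwa [P.first] at this
    have hiT : P.t (i+1) ≤ T := by
      have := hmono P.n le_rfl (i+1) (Nat.succ_le_of_lt hin)
      rwa [P.last] at this
    have h0i1 : (0:ℝ) ≤ P.t (i+1) := le_trans h0i (P.mono i hin).le
    have hd := hdelay (P.t (i+1)) h0i1 hiT
    have hmax : max (P.t (i+1) - ε) 0 ≤ P.t i :=
      max_le (by linarith [hmesh i hin]) h0i
    exact condMI_eq_zero μ _ _ _ (hd.trans (comap_seg_mono Y 0 hmax))
  refine ⟨hmain, ?_⟩
  refine le_antisymm ?_ zero_le
  set n : ℕ := ⌈T / ε⌉₊ with hn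
  have hεT : 0 ≤ T / ε := (div_pos hT hε).le
  have hilt : ∀ i : ℕ, i < n → (i:ℝ) * ε < T := by
    intro i hi
    have h1 : (i:ℝ) + 1 ≤ (n:ℝ) := by exact_mod_cast hi
    have h2 : (n:ℝ) < T / ε + 1 := Nat.ceil_lt_add_one hεT
    have h3 : (i:ℝ) < T / ε := by linarith
    calc (i:ℝ) * ε < (T / ε) * ε := mul_lt_mul_of_pos_right h3 hε
      _ = T := div_mul_cancel₀ T hε.ne'
  have hlast : T ≤ (n:ℝ) * ε := by
    have h := Nat.le_ceil (T / ε)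
    calc T = (T / ε) * ε := (div_mul_cancel₀ T hε.ne').symm
      _ ≤ (n:ℝ) * ε := mul_le_mul_of_nonneg_right h hε.le
  let P0 : Partn 0 T :=
    { n := n
      t := fun i => min ((i:ℝ) * ε) T
      mono := by
        intro i hi
        have h1 : (i:ℝ) * ε < T := hilt i hi
        show min ((i:ℝ) * ε) T < min (((i + 1 : ℕ) : ℝ) * ε) T
        rw [min_eq_left h1.le]
        apply lt_min
        · have : (i:ℝ) * ε < ((i:ℝ) + 1) * ε := by nlinarith
          calc (i:ℝ) * ε < ((i:ℝ) + 1) * ε := this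
            _ = ((i + 1 : ℕ) : ℝ) * ε := by push_cast; ring
        · exact h1
      first := by simp [hT.le]
      last := min_eq_right hlast }
  have hmesh0 : ∀ i < P0.n, P0.t (i + 1) - P0.t i ≤ ε := by
    intro i hi
    have h1 : (i:ℝ) * ε < T := hilt i hi
    show min (((i + 1 : ℕ) : ℝ) * ε) T - min ((i:ℝ) * ε) T ≤ ε
    rw [min_eq_left h1.le]
    have h2 : min (((i + 1 : ℕ) : ℝ) * ε) T ≤ ((i + 1 : ℕ) : ℝ) * ε := min_le_left _ _
    have h3 : ((i + 1 : ℕ) : ℝ) * ε = (i:ℝ) * ε + ε := by push_cast; ring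
    linarith
  calc dInfo μ X Y 0 T ≤ dInfoP μ X Y P0 := iInf_le _ P0
    _ = 0 := hmain P0 hmesh0


end CTDI
end
end
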